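/- There exists a universal constant C > 0 with the following property. Let ℓ > 0, let c ∈ ℝ³, let Q₁ be a cube with center c and side length ℓ, and let Q₂, Q₃ ⊂ B_{10ℓ}(c) be cubes of side lengths in [ℓ/4, 4ℓ]. Then for every v ∈ L¹(B_{10ℓ}(c)): ∫_{Q₁} ∫_{Q₂} ∫_{Q₃} ∫_{Sim(x₁,x₂,x₃)} |v(z)| dH²(z) dx₃ dx₂ dx₁ ≤ C·ℓ⁸ ∫_{B_{10ℓ}(c)} |v(z)| dz = C·ℓ¹¹ ⨍_{B_{10ℓ}(c)} |v(z)| dz. -/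

import Mathlib

open MeasureTheory Metric ENNReal

noncomputable section

local notation "E3" => EuclideanSpace ℝ (Fin 3)
local notation "D2" => (Fin 2 → ℝ)
open Set

/-- The closed axis-parallel cube with center `c` and side length `l`. -/
def cube (c : E3) (l : ℝ) : Set E3 :=
  {x | ∀ i : Fin 3, |x i - c i| ≤ l / 2}

-- volume of a cube
lemma cube_volume (c : E3) {l : ℝ} (hl : 0 ≤ l) :
    volume (cube c l) = ENNReal.ofReal l ^ 3 := by
  have h : cube c l = (MeasurableEquiv.toLp 2 (Fin 3 → ℝ)).symm ⁻¹'
      (Set.pi Set.univ fun i => Icc (c i - l/2) (c i + l/2)) := by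
    ext x
    simp only [cube, Set.mem_setOf_eq, Set.mem_preimage, Set.mem_pi, Set.mem_univ,
      forall_true_left, Set.mem_Icc, abs_sub_le_iff]
    constructor
    · intro h i
      have h1 := (h i).1; have h2 := (h i).2
      have : (MeasurableEquiv.toLp 2 (Fin 3 → ℝ)).symm x i = x i := rfl
      rw [this]; constructor <;> linarith
    · intro h i
      have h1 := (h i).1; have h2 := (h i).2
      have : (MeasurableEquiv.toLp 2 (Fin 3 → ℝ)).symm x i = x i := rfl
      rw [this] at h1 h2; constructor <;> linarith
  rw [h, (EuclideanSpace.volume_preserving_symm_measurableEquiv_toLp (Fin 3)).measure_preimage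
      (MeasurableSet.univ_pi fun i => measurableSet_Icc).nullMeasurableSet]
  rw [volume_pi_pi]
  have : ∀ i : Fin 3, volume (Icc (c i - l/2) (c i + l/2)) = ENNReal.ofReal l := by
    intro i; rw [Real.volume_Icc]; congr 1; ring
  rw [Finset.prod_congr rfl (fun i _ => this i)]
  simp [Finset.prod_const]

lemma coord_le_norm (x : E3) (i : Fin 3) : |x i| ≤ ‖x‖ := by
  rw [EuclideanSpace.norm_eq]
  have : |x i| = Real.sqrt (|x i|^2) := by
    rw [Real.sqrt_sq_eq_abs, abs_abs]
  rw [this]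
  apply Real.sqrt_le_sqrt
  have : |x i|^2 ≤ ∑ j, ‖x j‖^2 :=
    Finset.single_le_sum (f := fun j => ‖x j‖^2) (fun j _ => by positivity) (Finset.mem_univ i)
  simpa using this

lemma norm_le_of_mem_cube {c : E3} {l : ℝ} (hl : 0 ≤ l) {x : E3} (hx : x ∈ cube c l) :
    ‖x - c‖ ≤ l := by
  rw [EuclideanSpace.norm_eq]
  rw [show l = Real.sqrt (l^2) by rw [Real.sqrt_sq hl]]
  apply Real.sqrt_le_sqrt
  have h : ∀ i : Fin 3, ‖(x - c) i‖^2 ≤ (l/2)^2 := by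
    intro i
    have := hx i
    have h2 : ((x - c) i) = x i - c i := by simp
    rw [h2, Real.norm_eq_abs, sq_abs]
    nlinarith [this, abs_nonneg (x i - c i), sq_abs (x i - c i)]
  calc ∑ i, ‖(x - c) i‖^2 ≤ ∑ _i : Fin 3, (l/2)^2 := Finset.sum_le_sum fun i _ => h i
    _ ≤ l^2 := by simp; nlinarith

-- change of variables bound
lemma lintegral_shift_smul_le {F : E3 → ℝ≥0∞} (hF : Measurable F) (a : E3) {r : ℝ}
    (hr : 1/3 ≤ r) (Q : Set E3) :
    ∫⁻ x in Q, F (a + r • x) ≤ 27 * ∫⁻ z, F z := by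
  have hr0 : r ≠ 0 := by positivity
  have hψ : Measurable fun x : E3 => a + r • x := by fun_prop
  calc ∫⁻ x in Q, F (a + r • x)
      ≤ ∫⁻ x, F (a + r • x) := lintegral_mono' Measure.restrict_le_self le_rfl
    _ = ∫⁻ z, F z ∂(Measure.map (fun x : E3 => a + r • x) volume) :=
        (lintegral_map hF hψ).symm
    _ ≤ ∫⁻ z, F z ∂((27 : ℝ≥0∞) • volume) := by
        apply lintegral_mono'
        · rw [Measure.le_iff]
          intro s hs
          rw [Measure.map_apply hψ hs]
          have h1 : (fun x : E3 => a + r • x) ⁻¹' s = (r • ·) ⁻¹' ((a + ·) ⁻¹' s) := rfl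
          rw [h1, Measure.addHaar_preimage_smul volume hr0, measure_preimage_add]
          have h2 : ENNReal.ofReal |(r ^ Module.finrank ℝ E3)⁻¹| ≤ 27 := by
            rw [finrank_euclideanSpace_fin]
            have h3 : |(r ^ 3)⁻¹| ≤ 27 := by
              rw [abs_of_nonneg (by positivity)]
              rw [inv_le_comm₀ (by positivity) (by norm_num)]
              have h4 : (1/3:ℝ)^3 ≤ r^3 := pow_le_pow_left₀ (by norm_num) hr 3
              norm_num at h4 ⊢
              linarith
            calc ENNReal.ofReal |(r ^ 3)⁻¹| ≤ ENNReal.ofReal 27 :=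
                  ENNReal.ofReal_le_ofReal h3
              _ = 27 := by norm_num
          calc ENNReal.ofReal |(r ^ Module.finrank ℝ E3)⁻¹| * volume s ≤ 27 * volume s :=
                mul_le_mul_left h2 _
            _ = ((27 : ℝ≥0∞) • volume) s := by simp
        · exact le_rfl
    _ = 27 * ∫⁻ z, F z := by rw [lintegral_smul_measure, smul_eq_mul]

def T2 : Set D2 := {p | 0 ≤ p 0 ∧ 0 ≤ p 1 ∧ p 0 + p 1 ≤ 1}

lemma T2_measurable : MeasurableSet T2 := by
  apply MeasurableSet.inter
  · exact measurableSet_le measurable_const (measurable_pi_apply 0)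
  apply MeasurableSet.inter
  · exact measurableSet_le measurable_const (measurable_pi_apply 1)
  · exact measurableSet_le ((measurable_pi_apply 0).add (measurable_pi_apply 1)) measurable_const

lemma T2_convex : Convex ℝ T2 := by
  intro p hp q hq a b ha hb hab
  simp only [T2, Set.mem_setOf_eq] at *
  refine ⟨?_, ?_, ?_⟩
  · have : (a • p + b • q) 0 = a * p 0 + b * q 0 := by simp
    rw [this]; nlinarith [hp.1, hq.1]
  · have : (a • p + b • q) 1 = a * p 1 + b * q 1 := by simp
    rw [this]; nlinarith [hp.2.1, hq.2.1]
  · have h0 : (a • p + b • q) 0 = a * p 0 + b * q 0 := by simp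
    have h1 : (a • p + b • q) 1 = a * p 1 + b * q 1 := by simp
    rw [h0, h1]; nlinarith [hp.2.2, hq.2.2]

lemma T2_volume_le : volume T2 ≤ 1 := by
  have h : T2 ⊆ Set.pi Set.univ fun _ : Fin 2 => Icc (0:ℝ) 1 := by
    intro p hp
    obtain ⟨h0, h1, hs⟩ := hp
    intro i _
    fin_cases i <;> constructor <;> simp <;> linarith
  calc volume T2 ≤ volume (Set.pi Set.univ fun _ : Fin 2 => Icc (0:ℝ) 1) := measure_mono h
    _ = 1 := by rw [volume_pi_pi]; simp

lemma hull_lintegral_le {F : E3 → ℝ≥0∞} (hF : Measurable F) (x₁ x₂ x₃ : E3) {M : ℝ}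
    (hM : 0 ≤ M) (h : ‖x₂ - x₁‖ + ‖x₃ - x₁‖ ≤ M) :
    ∫⁻ z in convexHull ℝ {x₁, x₂, x₃}, F z ∂(μH[2]) ≤
      ENNReal.ofReal (M^2) *
        ∫⁻ p in T2, F (x₁ + (p 0 • (x₂ - x₁) + p 1 • (x₃ - x₁))) := by
  set u := x₂ - x₁ with hu
  set w := x₃ - x₁ with hw
  set φ : D2 → E3 := fun p => x₁ + (p 0 • u + p 1 • w) with hφ
  have hφm : Measurable φ := by fun_prop
  -- Lipschitz bound
  have hLip : LipschitzWith (‖u‖₊ + ‖w‖₊) φ := by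
    apply LipschitzWith.of_dist_le_mul
    intro p q
    have hd : dist (φ p) (φ q) = ‖(p 0 - q 0) • u + (p 1 - q 1) • w‖ := by
      rw [dist_eq_norm]
      congr 1
      simp only [hφ]
      module
    rw [hd]
    have h0 : |p 0 - q 0| ≤ dist p q := by
      have := dist_le_pi_dist p q 0; rwa [Real.dist_eq] at this
    have h1 : |p 1 - q 1| ≤ dist p q := by
      have := dist_le_pi_dist p q 1; rwa [Real.dist_eq] at this
    calc ‖(p 0 - q 0) • u + (p 1 - q 1) • w‖
        ≤ ‖(p 0 - q 0) • u‖ + ‖(p 1 - q 1) • w‖ := norm_add_le _ _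
      _ = |p 0 - q 0| * ‖u‖ + |p 1 - q 1| * ‖w‖ := by
          rw [norm_smul, norm_smul, Real.norm_eq_abs, Real.norm_eq_abs]
      _ ≤ dist p q * ‖u‖ + dist p q * ‖w‖ :=
          add_le_add (mul_le_mul_of_nonneg_right h0 (norm_nonneg u))
            (mul_le_mul_of_nonneg_right h1 (norm_nonneg w))
      _ = ↑(‖u‖₊ + ‖w‖₊) * dist p q := by push_cast; ring
  -- hull inside image of simplex
  have himg : convexHull ℝ {x₁, x₂, x₃} ⊆ φ '' T2 := by
    apply convexHull_min
    · intro z hz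
      simp only [Set.mem_insert_iff, Set.mem_singleton_iff] at hz
      rcases hz with rfl | rfl | rfl
      · exact ⟨0, ⟨le_rfl, le_rfl, by norm_num⟩, by simp [hφ]⟩
      · refine ⟨![1, 0], ⟨by norm_num, by norm_num, by norm_num⟩, ?_⟩
        simp only [hφ, Matrix.cons_val_zero, Matrix.cons_val_one, Matrix.head_cons,
          one_smul, zero_smul, add_zero, hu]
        abel
      · refine ⟨![0, 1], ⟨by norm_num, by norm_num, by norm_num⟩, ?_⟩
        simp only [hφ, Matrix.cons_val_zero, Matrix.cons_val_one, Matrix.head_cons,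
          one_smul, zero_smul, zero_add, hw]
        abel
    · -- image is convex
      have hL : φ '' T2 = (fun y => x₁ + y) ''
          ((fun p : D2 => p 0 • u + p 1 • w) '' T2) := by
        rw [Set.image_image]
      rw [hL]
      apply Convex.translate
      have : IsLinearMap ℝ (fun p : D2 => p 0 • u + p 1 • w) := by
        constructor
        · intro p q; simp [add_smul]; module
        · intro c p; simp [mul_smul, smul_add]
      exact T2_convex.is_linear_image this
  -- measure comparison
  have hmeas : (μH[2] : Measure E3).restrict (convexHull ℝ {x₁, x₂, x₃}) ≤
      ((↑(‖u‖₊ + ‖w‖₊) : ℝ≥0∞) ^ 2) • Measure.map φ (volume.restrict T2) := by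
    have hH2 : (μH[2] : Measure D2) = volume := by
      have := MeasureTheory.hausdorffMeasure_pi_real (ι := Fin 2)
      simpa using this
    rw [Measure.le_iff]
    intro s hs
    rw [Measure.restrict_apply hs]
    have hsub : s ∩ convexHull ℝ {x₁, x₂, x₃} ⊆ φ '' (φ ⁻¹' s ∩ T2) := by
      rintro z ⟨hzs, hzh⟩
      obtain ⟨p, hp, rfl⟩ := himg hzh
      exact ⟨p, ⟨hzs, hp⟩, rfl⟩
    calc (μH[2] : Measure E3) (s ∩ convexHull ℝ {x₁, x₂, x₃})
        ≤ (μH[2] : Measure E3) (φ '' (φ ⁻¹' s ∩ T2)) := measure_mono hsub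
      _ ≤ (↑(‖u‖₊ + ‖w‖₊) : ℝ≥0∞) ^ (2:ℝ) * (μH[2] : Measure D2) (φ ⁻¹' s ∩ T2) :=
          hLip.hausdorffMeasure_image_le (by norm_num) _
      _ = (↑(‖u‖₊ + ‖w‖₊) : ℝ≥0∞) ^ 2 * volume (φ ⁻¹' s ∩ T2) := by
          rw [hH2, show ((2:ℝ)) = ((2:ℕ):ℝ) by norm_num, ENNReal.rpow_natCast]
      _ = (((↑(‖u‖₊ + ‖w‖₊) : ℝ≥0∞) ^ 2) • Measure.map φ (volume.restrict T2)) s := by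
          rw [Measure.smul_apply, Measure.map_apply hφm hs,
            Measure.restrict_apply (hφm hs)]
          simp
  calc ∫⁻ z in convexHull ℝ {x₁, x₂, x₃}, F z ∂(μH[2])
      ≤ ∫⁻ z, F z ∂(((↑(‖u‖₊ + ‖w‖₊) : ℝ≥0∞) ^ 2) • Measure.map φ (volume.restrict T2)) :=
        lintegral_mono' hmeas le_rfl
    _ = (↑(‖u‖₊ + ‖w‖₊) : ℝ≥0∞) ^ 2 * ∫⁻ z, F z ∂(Measure.map φ (volume.restrict T2)) := by
        rw [lintegral_smul_measure, smul_eq_mul]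
    _ = (↑(‖u‖₊ + ‖w‖₊) : ℝ≥0∞) ^ 2 * ∫⁻ p in T2, F (φ p) := by
        rw [lintegral_map hF hφm]
    _ ≤ ENNReal.ofReal (M^2) * ∫⁻ p in T2, F (φ p) := by
        apply mul_le_mul_left
        have h1 : (↑(‖u‖₊ + ‖w‖₊) : ℝ≥0∞) = ENNReal.ofReal (‖u‖ + ‖w‖) := by
          rw [ENNReal.ofReal, Real.toNNReal_add (norm_nonneg _) (norm_nonneg _)]
          push_cast
          simp [norm_toNNReal]
        rw [h1, ← ENNReal.ofReal_pow (by positivity)]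
        apply ENNReal.ofReal_le_ofReal
        have := norm_nonneg u
        have := norm_nonneg w
        nlinarith

lemma measurableSet_cube (c : E3) (l : ℝ) : MeasurableSet (cube c l) := by
  have h : cube c l = ⋂ i : Fin 3, {x : E3 | |x i - c i| ≤ l/2} := by
    ext x; simp [cube]
  rw [h]
  exact MeasurableSet.iInter fun i =>
    measurableSet_le (by fun_prop) measurable_const

lemma exists_envelope {c : E3} {R : ℝ} (v : E3 → ℝ) (hv : IntegrableOn v (ball c R))
    (hv0 : ∀ x ∉ ball c R, v x = 0) :
    ∃ F : E3 → ℝ≥0∞, Measurable F ∧ (∀ z, ENNReal.ofReal |v z| ≤ F z) ∧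
      ∫⁻ z, F z = ∫⁻ z in ball c R, ENNReal.ofReal |v z| := by
  classical
  have hvind : v = (ball c R).indicator v := by
    funext z
    by_cases hz : z ∈ ball c R
    · simp [Set.indicator_of_mem hz]
    · simp [Set.indicator_of_notMem hz, hv0 z hz]
  have hvm : AEStronglyMeasurable v volume := by
    rw [hvind]
    exact (aestronglyMeasurable_indicator_iff measurableSet_ball).2 hv.aestronglyMeasurable
  set h : E3 → ℝ≥0∞ := fun z => ENNReal.ofReal |v z| with hh
  have hm : AEMeasurable h volume := by
    exact ENNReal.measurable_ofReal.comp_aemeasurable (measurable_abs.comp_aemeasurable hvm.aemeasurable)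
  set N : Set E3 := toMeasurable volume {z | h z ≠ hm.mk h z} with hN
  have hNnull : volume N = 0 := by
    rw [hN, measure_toMeasurable]
    exact hm.ae_eq_mk
  have hNmeas : MeasurableSet N := measurableSet_toMeasurable _ _
  refine ⟨fun z => if z ∈ N then ⊤ else hm.mk h z, ?_, ?_, ?_⟩
  · exact Measurable.ite hNmeas measurable_const hm.measurable_mk
  · intro z
    by_cases hz : z ∈ N
    · simp [hz]
    · simp only [hz, if_false]
      have : h z = hm.mk h z := by
        by_contra hne
        exact hz (subset_toMeasurable _ _ hne)
      exact this.le
  · have e1 : (fun z => if z ∈ N then ⊤ else hm.mk h z) =ᵐ[volume] hm.mk h := by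
      filter_upwards [measure_eq_zero_iff_ae_notMem.1 hNnull] with z hz
      simp [hz]
    rw [lintegral_congr_ae e1, lintegral_congr_ae hm.ae_eq_mk.symm]
    have e2 : h = (ball c R).indicator h := by
      funext z
      by_cases hz : z ∈ ball c R
      · simp [Set.indicator_of_mem hz]
      · simp [Set.indicator_of_notMem hz, hh, hv0 z hz]
    conv_lhs => rw [e2]
    rw [lintegral_indicator measurableSet_ball]

def S1 : Set D2 := T2 ∩ {p | p 0 + p 1 ≤ 2/3}
def S2 : Set D2 := T2 ∩ {p | 1/3 ≤ p 0}
def S3 : Set D2 := T2 ∩ {p | 1/3 ≤ p 1}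

lemma S1_meas : MeasurableSet S1 :=
  T2_measurable.inter (measurableSet_le ((measurable_pi_apply 0).add (measurable_pi_apply 1))
    measurable_const)
lemma S2_meas : MeasurableSet S2 :=
  T2_measurable.inter (measurableSet_le measurable_const (measurable_pi_apply 0))
lemma S3_meas : MeasurableSet S3 :=
  T2_measurable.inter (measurableSet_le measurable_const (measurable_pi_apply 1))

lemma S1_vol : volume S1 ≤ 1 :=
  le_trans (measure_mono Set.inter_subset_left) T2_volume_le
lemma S2_vol : volume S2 ≤ 1 :=
  le_trans (measure_mono Set.inter_subset_left) T2_volume_le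
lemma S3_vol : volume S3 ≤ 1 :=
  le_trans (measure_mono Set.inter_subset_left) T2_volume_le

lemma T2_subset : T2 ⊆ (S1 ∪ S2) ∪ S3 := by
  intro p hp
  by_cases h0 : 1/3 ≤ p 0
  · exact Or.inl (Or.inr ⟨hp, h0⟩)
  by_cases h1 : 1/3 ≤ p 1
  · exact Or.inr ⟨hp, h1⟩
  · exact Or.inl (Or.inl ⟨hp, by push_neg at h0 h1; simp only [Set.mem_setOf_eq]; linarith⟩)

lemma block_inner {F : E3 → ℝ≥0∞} (hF : Measurable F) {S : Set D2}
    (hSm : MeasurableSet S) (hSv : volume S ≤ 1) {r : D2 → ℝ}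
    (hr : ∀ p ∈ S, 1/3 ≤ r p) (a : D2 → E3) (Q : Set E3) :
    ∫⁻ p in S, ∫⁻ x in Q, F (a p + r p • x) ≤ 27 * ∫⁻ z, F z := by
  calc ∫⁻ p in S, ∫⁻ x in Q, F (a p + r p • x)
      ≤ ∫⁻ _p in S, 27 * ∫⁻ z, F z :=
        setLIntegral_mono' hSm fun p hp => lintegral_shift_smul_le hF (a p) (hr p hp) Q
    _ = (27 * ∫⁻ z, F z) * volume S := setLIntegral_const _ _
    _ ≤ (27 * ∫⁻ z, F z) * 1 := mul_le_mul_right hSv _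
    _ = 27 * ∫⁻ z, F z := mul_one _

lemma block3 {F : E3 → ℝ≥0∞} (hF : Measurable F) (x₁ x₂ : E3) (Q₃ : Set E3) :
    ∫⁻ x₃ in Q₃, ∫⁻ p in S3, F (x₁ + (p 0 • (x₂ - x₁) + p 1 • (x₃ - x₁))) ≤
      27 * ∫⁻ z, F z := by
  have hswap : ∫⁻ x₃ in Q₃, ∫⁻ p in S3, F (x₁ + (p 0 • (x₂ - x₁) + p 1 • (x₃ - x₁))) =
      ∫⁻ p in S3, ∫⁻ x₃ in Q₃, F (x₁ + (p 0 • (x₂ - x₁) + p 1 • (x₃ - x₁))) := by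
    apply lintegral_lintegral_swap
    exact (hF.comp (by fun_prop)).aemeasurable
  rw [hswap]
  have hcongr : ∀ p : D2, ∀ x₃ : E3,
      x₁ + (p 0 • (x₂ - x₁) + p 1 • (x₃ - x₁)) =
        (x₁ + p 0 • (x₂ - x₁) - p 1 • x₁) + p 1 • x₃ := by
    intro p x₃; module
  calc ∫⁻ p in S3, ∫⁻ x₃ in Q₃, F (x₁ + (p 0 • (x₂ - x₁) + p 1 • (x₃ - x₁)))
      = ∫⁻ p in S3, ∫⁻ x₃ in Q₃, F ((x₁ + p 0 • (x₂ - x₁) - p 1 • x₁) + p 1 • x₃) := by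
        apply lintegral_congr; intro p; apply lintegral_congr; intro x₃
        rw [hcongr p x₃]
    _ ≤ 27 * ∫⁻ z, F z :=
        block_inner hF S3_meas S3_vol (fun p hp => hp.2) _ Q₃

lemma block2 {F : E3 → ℝ≥0∞} (hF : Measurable F) (x₁ : E3) (Q₂ Q₃ : Set E3) :
    ∫⁻ x₂ in Q₂, ∫⁻ x₃ in Q₃, ∫⁻ p in S2, F (x₁ + (p 0 • (x₂ - x₁) + p 1 • (x₃ - x₁))) ≤
      (27 * ∫⁻ z, F z) * volume Q₃ := by
  have hswap1 : ∫⁻ x₂ in Q₂, ∫⁻ x₃ in Q₃, ∫⁻ p in S2,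
        F (x₁ + (p 0 • (x₂ - x₁) + p 1 • (x₃ - x₁))) =
      ∫⁻ x₃ in Q₃, ∫⁻ x₂ in Q₂, ∫⁻ p in S2,
        F (x₁ + (p 0 • (x₂ - x₁) + p 1 • (x₃ - x₁))) := by
    apply lintegral_lintegral_swap
    apply Measurable.aemeasurable
    apply Measurable.lintegral_prod_right (f := fun (q : E3 × E3) (p : D2) =>
      F (x₁ + (p 0 • (q.1 - x₁) + p 1 • (q.2 - x₁))))
    exact hF.comp (by fun_prop)
  rw [hswap1]
  have hinner : ∀ x₃ : E3, ∫⁻ x₂ in Q₂, ∫⁻ p in S2,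
      F (x₁ + (p 0 • (x₂ - x₁) + p 1 • (x₃ - x₁))) ≤ 27 * ∫⁻ z, F z := by
    intro x₃
    have hswap2 : ∫⁻ x₂ in Q₂, ∫⁻ p in S2,
          F (x₁ + (p 0 • (x₂ - x₁) + p 1 • (x₃ - x₁))) =
        ∫⁻ p in S2, ∫⁻ x₂ in Q₂,
          F (x₁ + (p 0 • (x₂ - x₁) + p 1 • (x₃ - x₁))) := by
      apply lintegral_lintegral_swap
      exact (hF.comp (by fun_prop)).aemeasurable
    rw [hswap2]
    calc ∫⁻ p in S2, ∫⁻ x₂ in Q₂, F (x₁ + (p 0 • (x₂ - x₁) + p 1 • (x₃ - x₁)))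
        = ∫⁻ p in S2, ∫⁻ x₂ in Q₂,
            F ((x₁ - p 0 • x₁ + p 1 • (x₃ - x₁)) + p 0 • x₂) := by
          apply lintegral_congr; intro p; apply lintegral_congr; intro x₂
          congr 1; module
      _ ≤ 27 * ∫⁻ z, F z :=
          block_inner hF S2_meas S2_vol (fun p hp => hp.2) _ Q₂
  calc ∫⁻ x₃ in Q₃, ∫⁻ x₂ in Q₂, ∫⁻ p in S2,
        F (x₁ + (p 0 • (x₂ - x₁) + p 1 • (x₃ - x₁)))
      ≤ ∫⁻ _x₃ in Q₃, 27 * ∫⁻ z, F z := lintegral_mono' le_rfl fun x₃ => hinner x₃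
    _ = (27 * ∫⁻ z, F z) * volume Q₃ := setLIntegral_const _ _

lemma block1 {F : E3 → ℝ≥0∞} (hF : Measurable F) (Q₁ Q₂ Q₃ : Set E3) :
    ∫⁻ x₁ in Q₁, ∫⁻ x₂ in Q₂, ∫⁻ x₃ in Q₃, ∫⁻ p in S1,
        F (x₁ + (p 0 • (x₂ - x₁) + p 1 • (x₃ - x₁))) ≤
      ((27 * ∫⁻ z, F z) * volume Q₃) * volume Q₂ := by
  have hswap1 : ∫⁻ x₁ in Q₁, ∫⁻ x₂ in Q₂, ∫⁻ x₃ in Q₃, ∫⁻ p in S1,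
        F (x₁ + (p 0 • (x₂ - x₁) + p 1 • (x₃ - x₁))) =
      ∫⁻ x₂ in Q₂, ∫⁻ x₁ in Q₁, ∫⁻ x₃ in Q₃, ∫⁻ p in S1,
        F (x₁ + (p 0 • (x₂ - x₁) + p 1 • (x₃ - x₁))) := by
    apply lintegral_lintegral_swap
    apply Measurable.aemeasurable
    apply Measurable.lintegral_prod_right (f := fun (q : E3 × E3) (x₃ : E3) =>
      ∫⁻ p in S1, F (q.1 + (p 0 • (q.2 - q.1) + p 1 • (x₃ - q.1))))
    apply Measurable.lintegral_prod_right (f := fun (q : (E3 × E3) × E3) (p : D2) =>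
      F (q.1.1 + (p 0 • (q.1.2 - q.1.1) + p 1 • (q.2 - q.1.1))))
    exact hF.comp (by fun_prop)
  rw [hswap1]
  have hmid : ∀ x₂ : E3, ∫⁻ x₁ in Q₁, ∫⁻ x₃ in Q₃, ∫⁻ p in S1,
      F (x₁ + (p 0 • (x₂ - x₁) + p 1 • (x₃ - x₁))) ≤ (27 * ∫⁻ z, F z) * volume Q₃ := by
    intro x₂
    have hswap2 : ∫⁻ x₁ in Q₁, ∫⁻ x₃ in Q₃, ∫⁻ p in S1,
          F (x₁ + (p 0 • (x₂ - x₁) + p 1 • (x₃ - x₁))) =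
        ∫⁻ x₃ in Q₃, ∫⁻ x₁ in Q₁, ∫⁻ p in S1,
          F (x₁ + (p 0 • (x₂ - x₁) + p 1 • (x₃ - x₁))) := by
      apply lintegral_lintegral_swap
      apply Measurable.aemeasurable
      apply Measurable.lintegral_prod_right (f := fun (q : E3 × E3) (p : D2) =>
        F (q.1 + (p 0 • (x₂ - q.1) + p 1 • (q.2 - q.1))))
      exact hF.comp (by fun_prop)
    rw [hswap2]
    have hinner : ∀ x₃ : E3, ∫⁻ x₁ in Q₁, ∫⁻ p in S1,
        F (x₁ + (p 0 • (x₂ - x₁) + p 1 • (x₃ - x₁))) ≤ 27 * ∫⁻ z, F z := by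
      intro x₃
      have hswap3 : ∫⁻ x₁ in Q₁, ∫⁻ p in S1,
            F (x₁ + (p 0 • (x₂ - x₁) + p 1 • (x₃ - x₁))) =
          ∫⁻ p in S1, ∫⁻ x₁ in Q₁,
            F (x₁ + (p 0 • (x₂ - x₁) + p 1 • (x₃ - x₁))) := by
        apply lintegral_lintegral_swap
        exact (hF.comp (by fun_prop)).aemeasurable
      rw [hswap3]
      calc ∫⁻ p in S1, ∫⁻ x₁ in Q₁, F (x₁ + (p 0 • (x₂ - x₁) + p 1 • (x₃ - x₁)))
          = ∫⁻ p in S1, ∫⁻ x₁ in Q₁,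
              F ((p 0 • x₂ + p 1 • x₃) + (1 - p 0 - p 1) • x₁) := by
            apply lintegral_congr; intro p; apply lintegral_congr; intro x₁
            congr 1; module
        _ ≤ 27 * ∫⁻ z, F z := by
            apply block_inner hF S1_meas S1_vol (r := fun p => 1 - p 0 - p 1) ?_ _ Q₁
            intro p hp
            have := hp.2
            simp only [Set.mem_setOf_eq] at this
            linarith
    calc ∫⁻ x₃ in Q₃, ∫⁻ x₁ in Q₁, ∫⁻ p in S1,
          F (x₁ + (p 0 • (x₂ - x₁) + p 1 • (x₃ - x₁)))
        ≤ ∫⁻ _x₃ in Q₃, 27 * ∫⁻ z, F z := lintegral_mono' le_rfl fun x₃ => hinner x₃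
      _ = (27 * ∫⁻ z, F z) * volume Q₃ := setLIntegral_const _ _
  calc ∫⁻ x₂ in Q₂, ∫⁻ x₁ in Q₁, ∫⁻ x₃ in Q₃, ∫⁻ p in S1,
        F (x₁ + (p 0 • (x₂ - x₁) + p 1 • (x₃ - x₁)))
      ≤ ∫⁻ _x₂ in Q₂, (27 * ∫⁻ z, F z) * volume Q₃ :=
        lintegral_mono' le_rfl fun x₂ => hmid x₂
    _ = ((27 * ∫⁻ z, F z) * volume Q₃) * volume Q₂ := setLIntegral_const _ _

lemma combine {F : E3 → ℝ≥0∞} (hF : Measurable F) (Q₁ Q₂ Q₃ : Set E3)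
    {V : ℝ≥0∞} (hV1 : volume Q₁ ≤ V) (hV2 : volume Q₂ ≤ V) (hV3 : volume Q₃ ≤ V) :
    ∫⁻ x₁ in Q₁, ∫⁻ x₂ in Q₂, ∫⁻ x₃ in Q₃, ∫⁻ p in T2,
        F (x₁ + (p 0 • (x₂ - x₁) + p 1 • (x₃ - x₁))) ≤
      3 * ((27 * ∫⁻ z, F z) * (V * V)) := by
  set I' := ∫⁻ z, F z with hI'
  -- abbreviations
  set g1 : E3 → E3 → E3 → ℝ≥0∞ := fun x₁ x₂ x₃ =>
    ∫⁻ p in S1, F (x₁ + (p 0 • (x₂ - x₁) + p 1 • (x₃ - x₁))) with hg1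
  set g2 : E3 → E3 → E3 → ℝ≥0∞ := fun x₁ x₂ x₃ =>
    ∫⁻ p in S2, F (x₁ + (p 0 • (x₂ - x₁) + p 1 • (x₃ - x₁))) with hg2
  set g3 : E3 → E3 → E3 → ℝ≥0∞ := fun x₁ x₂ x₃ =>
    ∫⁻ p in S3, F (x₁ + (p 0 • (x₂ - x₁) + p 1 • (x₃ - x₁))) with hg3
  -- measurability of the gᵢ in each slice
  have mx3 : ∀ (S : Set D2) (x₁ x₂ : E3), Measurable fun x₃ =>
      ∫⁻ p in S, F (x₁ + (p 0 • (x₂ - x₁) + p 1 • (x₃ - x₁))) := by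
    intro S x₁ x₂
    apply Measurable.lintegral_prod_right (f := fun (x₃ : E3) (p : D2) =>
      F (x₁ + (p 0 • (x₂ - x₁) + p 1 • (x₃ - x₁))))
    exact hF.comp (by fun_prop)
  have mx2 : ∀ (S : Set D2) (x₁ : E3), Measurable fun x₂ =>
      ∫⁻ x₃ in Q₃, ∫⁻ p in S, F (x₁ + (p 0 • (x₂ - x₁) + p 1 • (x₃ - x₁))) := by
    intro S x₁
    apply Measurable.lintegral_prod_right (f := fun (x₂ : E3) (x₃ : E3) =>
      ∫⁻ p in S, F (x₁ + (p 0 • (x₂ - x₁) + p 1 • (x₃ - x₁))))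
    apply Measurable.lintegral_prod_right (f := fun (q : E3 × E3) (p : D2) =>
      F (x₁ + (p 0 • (q.1 - x₁) + p 1 • (q.2 - x₁))))
    exact hF.comp (by fun_prop)
  -- pointwise splitting
  have hsplit : ∀ x₁ x₂ x₃ : E3, (∫⁻ p in T2,
      F (x₁ + (p 0 • (x₂ - x₁) + p 1 • (x₃ - x₁)))) ≤
      g1 x₁ x₂ x₃ + g2 x₁ x₂ x₃ + g3 x₁ x₂ x₃ := by
    intro x₁ x₂ x₃
    calc ∫⁻ p in T2, F (x₁ + (p 0 • (x₂ - x₁) + p 1 • (x₃ - x₁)))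
        ≤ ∫⁻ p in (S1 ∪ S2) ∪ S3, F (x₁ + (p 0 • (x₂ - x₁) + p 1 • (x₃ - x₁))) :=
          lintegral_mono' (Measure.restrict_mono T2_subset le_rfl) le_rfl
      _ ≤ (∫⁻ p in S1 ∪ S2, F (x₁ + (p 0 • (x₂ - x₁) + p 1 • (x₃ - x₁)))) +
            g3 x₁ x₂ x₃ := lintegral_union_le _ _ _
      _ ≤ g1 x₁ x₂ x₃ + g2 x₁ x₂ x₃ + g3 x₁ x₂ x₃ :=
          add_le_add_left (lintegral_union_le _ _ _) _
  -- push sum through the three integrals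
  have step : ∫⁻ x₁ in Q₁, ∫⁻ x₂ in Q₂, ∫⁻ x₃ in Q₃, ∫⁻ p in T2,
        F (x₁ + (p 0 • (x₂ - x₁) + p 1 • (x₃ - x₁))) ≤
      (∫⁻ x₁ in Q₁, ∫⁻ x₂ in Q₂, ∫⁻ x₃ in Q₃, g1 x₁ x₂ x₃) +
      (∫⁻ x₁ in Q₁, ∫⁻ x₂ in Q₂, ∫⁻ x₃ in Q₃, g2 x₁ x₂ x₃) +
      (∫⁻ x₁ in Q₁, ∫⁻ x₂ in Q₂, ∫⁻ x₃ in Q₃, g3 x₁ x₂ x₃) := by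
    have e3 : ∀ x₁ x₂ : E3, ∫⁻ x₃ in Q₃,
        (g1 x₁ x₂ x₃ + g2 x₁ x₂ x₃ + g3 x₁ x₂ x₃) =
        (∫⁻ x₃ in Q₃, g1 x₁ x₂ x₃) + (∫⁻ x₃ in Q₃, g2 x₁ x₂ x₃) +
          (∫⁻ x₃ in Q₃, g3 x₁ x₂ x₃) := by
      intro x₁ x₂
      rw [lintegral_add_left (show Measurable fun x₃ => g1 x₁ x₂ x₃ + g2 x₁ x₂ x₃ from
          (mx3 S1 x₁ x₂).add (mx3 S2 x₁ x₂)),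
        lintegral_add_left (show Measurable fun x₃ => g1 x₁ x₂ x₃ from mx3 S1 x₁ x₂)]
    have e2 : ∀ x₁ : E3, ∫⁻ x₂ in Q₂,
        ((∫⁻ x₃ in Q₃, g1 x₁ x₂ x₃) + (∫⁻ x₃ in Q₃, g2 x₁ x₂ x₃) +
          (∫⁻ x₃ in Q₃, g3 x₁ x₂ x₃)) =
        (∫⁻ x₂ in Q₂, ∫⁻ x₃ in Q₃, g1 x₁ x₂ x₃) +
          (∫⁻ x₂ in Q₂, ∫⁻ x₃ in Q₃, g2 x₁ x₂ x₃) +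
          (∫⁻ x₂ in Q₂, ∫⁻ x₃ in Q₃, g3 x₁ x₂ x₃) := by
      intro x₁
      rw [lintegral_add_left (show Measurable fun x₂ =>
          (∫⁻ x₃ in Q₃, g1 x₁ x₂ x₃) + ∫⁻ x₃ in Q₃, g2 x₁ x₂ x₃ from (mx2 S1 x₁).add (mx2 S2 x₁)),
        lintegral_add_left (show Measurable fun x₂ => ∫⁻ x₃ in Q₃, g1 x₁ x₂ x₃ from mx2 S1 x₁)]
    calc ∫⁻ x₁ in Q₁, ∫⁻ x₂ in Q₂, ∫⁻ x₃ in Q₃, ∫⁻ p in T2,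
          F (x₁ + (p 0 • (x₂ - x₁) + p 1 • (x₃ - x₁)))
        ≤ ∫⁻ x₁ in Q₁, ∫⁻ x₂ in Q₂, ∫⁻ x₃ in Q₃,
            (g1 x₁ x₂ x₃ + g2 x₁ x₂ x₃ + g3 x₁ x₂ x₃) :=
          lintegral_mono fun x₁ => lintegral_mono fun x₂ =>
            lintegral_mono fun x₃ => hsplit x₁ x₂ x₃
      _ = ∫⁻ x₁ in Q₁, ((∫⁻ x₂ in Q₂, ∫⁻ x₃ in Q₃, g1 x₁ x₂ x₃) +
            (∫⁻ x₂ in Q₂, ∫⁻ x₃ in Q₃, g2 x₁ x₂ x₃) +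
            (∫⁻ x₂ in Q₂, ∫⁻ x₃ in Q₃, g3 x₁ x₂ x₃)) := by
          apply lintegral_congr; intro x₁
          rw [lintegral_congr (e3 x₁)]
          exact e2 x₁
      _ ≤ (∫⁻ x₁ in Q₁, ∫⁻ x₂ in Q₂, ∫⁻ x₃ in Q₃, g1 x₁ x₂ x₃) +
          (∫⁻ x₁ in Q₁, ∫⁻ x₂ in Q₂, ∫⁻ x₃ in Q₃, g2 x₁ x₂ x₃) +
          (∫⁻ x₁ in Q₁, ∫⁻ x₂ in Q₂, ∫⁻ x₃ in Q₃, g3 x₁ x₂ x₃) := by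
          have M1 : Measurable fun x₁ : E3 => ∫⁻ x₂ in Q₂, ∫⁻ x₃ in Q₃, g1 x₁ x₂ x₃ := by
            apply Measurable.lintegral_prod_right (f := fun (x₁ : E3) (x₂ : E3) =>
              ∫⁻ x₃ in Q₃, g1 x₁ x₂ x₃)
            apply Measurable.lintegral_prod_right (f := fun (q : E3 × E3) (x₃ : E3) =>
              g1 q.1 q.2 x₃)
            apply Measurable.lintegral_prod_right (f := fun (q : (E3 × E3) × E3) (p : D2) =>
              F (q.1.1 + (p 0 • (q.1.2 - q.1.1) + p 1 • (q.2 - q.1.1))))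
            exact hF.comp (by fun_prop)
          have M2 : Measurable fun x₁ : E3 => ∫⁻ x₂ in Q₂, ∫⁻ x₃ in Q₃, g2 x₁ x₂ x₃ := by
            apply Measurable.lintegral_prod_right (f := fun (x₁ : E3) (x₂ : E3) =>
              ∫⁻ x₃ in Q₃, g2 x₁ x₂ x₃)
            apply Measurable.lintegral_prod_right (f := fun (q : E3 × E3) (x₃ : E3) =>
              g2 q.1 q.2 x₃)
            apply Measurable.lintegral_prod_right (f := fun (q : (E3 × E3) × E3) (p : D2) =>
              F (q.1.1 + (p 0 • (q.1.2 - q.1.1) + p 1 • (q.2 - q.1.1))))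
            exact hF.comp (by fun_prop)
          rw [← lintegral_add_left M1, ← lintegral_add_left (show Measurable fun x₁ =>
              (∫⁻ x₂ in Q₂, ∫⁻ x₃ in Q₃, g1 x₁ x₂ x₃) + ∫⁻ x₂ in Q₂, ∫⁻ x₃ in Q₃, g2 x₁ x₂ x₃
              from M1.add M2)]
  -- bound the three terms
  have t1 : ∫⁻ x₁ in Q₁, ∫⁻ x₂ in Q₂, ∫⁻ x₃ in Q₃, g1 x₁ x₂ x₃ ≤ (27 * I') * (V * V) := by
    calc ∫⁻ x₁ in Q₁, ∫⁻ x₂ in Q₂, ∫⁻ x₃ in Q₃, g1 x₁ x₂ x₃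
        ≤ ((27 * I') * volume Q₃) * volume Q₂ := block1 hF Q₁ Q₂ Q₃
      _ ≤ ((27 * I') * V) * V := by
          apply mul_le_mul' (mul_le_mul' le_rfl hV3) hV2
      _ = (27 * I') * (V * V) := by ring
  have t2 : ∫⁻ x₁ in Q₁, ∫⁻ x₂ in Q₂, ∫⁻ x₃ in Q₃, g2 x₁ x₂ x₃ ≤ (27 * I') * (V * V) := by
    calc ∫⁻ x₁ in Q₁, ∫⁻ x₂ in Q₂, ∫⁻ x₃ in Q₃, g2 x₁ x₂ x₃
        ≤ ∫⁻ _x₁ in Q₁, (27 * I') * volume Q₃ :=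
          lintegral_mono' le_rfl fun x₁ => block2 hF x₁ Q₂ Q₃
      _ = ((27 * I') * volume Q₃) * volume Q₁ := setLIntegral_const _ _
      _ ≤ ((27 * I') * V) * V := mul_le_mul' (mul_le_mul' le_rfl hV3) hV1
      _ = (27 * I') * (V * V) := by ring
  have t3 : ∫⁻ x₁ in Q₁, ∫⁻ x₂ in Q₂, ∫⁻ x₃ in Q₃, g3 x₁ x₂ x₃ ≤ (27 * I') * (V * V) := by
    have h1 : ∀ x₁ : E3, ∫⁻ x₂ in Q₂, ∫⁻ x₃ in Q₃, g3 x₁ x₂ x₃ ≤ (27 * I') * volume Q₂ := by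
      intro x₁
      calc ∫⁻ x₂ in Q₂, ∫⁻ x₃ in Q₃, g3 x₁ x₂ x₃
          ≤ ∫⁻ _x₂ in Q₂, 27 * I' := lintegral_mono' le_rfl fun x₂ => block3 hF x₁ x₂ Q₃
        _ = (27 * I') * volume Q₂ := setLIntegral_const _ _
    calc ∫⁻ x₁ in Q₁, ∫⁻ x₂ in Q₂, ∫⁻ x₃ in Q₃, g3 x₁ x₂ x₃
        ≤ ∫⁻ _x₁ in Q₁, (27 * I') * volume Q₂ := lintegral_mono' le_rfl fun x₁ => h1 x₁
      _ = ((27 * I') * volume Q₂) * volume Q₁ := setLIntegral_const _ _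
      _ ≤ ((27 * I') * V) * V := mul_le_mul' (mul_le_mul' le_rfl hV2) hV1
      _ = (27 * I') * (V * V) := by ring
  calc ∫⁻ x₁ in Q₁, ∫⁻ x₂ in Q₂, ∫⁻ x₃ in Q₃, ∫⁻ p in T2,
        F (x₁ + (p 0 • (x₂ - x₁) + p 1 • (x₃ - x₁)))
      ≤ (∫⁻ x₁ in Q₁, ∫⁻ x₂ in Q₂, ∫⁻ x₃ in Q₃, g1 x₁ x₂ x₃) +
        (∫⁻ x₁ in Q₁, ∫⁻ x₂ in Q₂, ∫⁻ x₃ in Q₃, g2 x₁ x₂ x₃) +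
        (∫⁻ x₁ in Q₁, ∫⁻ x₂ in Q₂, ∫⁻ x₃ in Q₃, g3 x₁ x₂ x₃) := step
    _ ≤ (27 * I') * (V * V) + (27 * I') * (V * V) + (27 * I') * (V * V) :=
        add_le_add (add_le_add t1 t2) t3
    _ = 3 * ((27 * I') * (V * V)) := by ring

/-- **Scaled version of Lemma 3.8 (b).** For a cube `Q₁` of side `ℓ` centered at `c`
and comparable cubes `Q₂, Q₃ ⊂ B_{10ℓ}(c)`, the iterated triangle integral of `|v|` is
bounded by `C ℓ⁸ ∫_{B_{10ℓ}(c)} |v| = C ℓ¹¹ ⨍_{B_{10ℓ}(c)} |v|`. -/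
theorem triangle_integral_bound_scaled :
    ∃ C : ℝ, 0 < C ∧
      ∀ (ℓ : ℝ), 0 < ℓ → ∀ (c : E3) (c₂ : E3) (l₂ : ℝ) (c₃ : E3) (l₃ : ℝ),
        ℓ / 4 ≤ l₂ → l₂ ≤ 4 * ℓ → cube c₂ l₂ ⊆ ball c (10 * ℓ) →
        ℓ / 4 ≤ l₃ → l₃ ≤ 4 * ℓ → cube c₃ l₃ ⊆ ball c (10 * ℓ) →
        ∀ v : E3 → ℝ, IntegrableOn v (ball c (10 * ℓ)) →
          (∀ x ∉ ball c (10 * ℓ), v x = 0) →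
          (∫⁻ x₁ in cube c ℓ, ∫⁻ x₂ in cube c₂ l₂, ∫⁻ x₃ in cube c₃ l₃,
              ∫⁻ z in convexHull ℝ {x₁, x₂, x₃}, ENNReal.ofReal |v z| ∂(μH[2])
            ≤ ENNReal.ofReal (C * ℓ ^ 8) *
                ∫⁻ z in ball c (10 * ℓ), ENNReal.ofReal |v z|) ∧
          (∫⁻ x₁ in cube c ℓ, ∫⁻ x₂ in cube c₂ l₂, ∫⁻ x₃ in cube c₃ l₃,
              ∫⁻ z in convexHull ℝ {x₁, x₂, x₃}, ENNReal.ofReal |v z| ∂(μH[2])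
            ≤ ENNReal.ofReal (C * ℓ ^ 11) *
                ((volume (ball c (10 * ℓ)))⁻¹ *
                  ∫⁻ z in ball c (10 * ℓ), ENNReal.ofReal |v z|)) := by
  refine ⟨530841600 * 8000, by norm_num, ?_⟩
  intro ℓ hℓ c c₂ l₂ c₃ l₃ h2lo h2hi h2sub h3lo h3hi h3sub v hv hv0
  obtain ⟨F, hF, hFle, hFint⟩ := exists_envelope v hv hv0
  set I := ∫⁻ z in ball c (10 * ℓ), ENNReal.ofReal |v z| with hI
  have hl2 : 0 ≤ l₂ := le_trans (by positivity) h2lo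
  have hl3 : 0 ≤ l₃ := le_trans (by positivity) h3lo
  set V : ℝ≥0∞ := ENNReal.ofReal ((4*ℓ)^3) with hV
  have hvol1 : volume (cube c ℓ) ≤ V := by
    rw [cube_volume c hℓ.le, ← ENNReal.ofReal_pow hℓ.le]
    exact ENNReal.ofReal_le_ofReal (pow_le_pow_left₀ hℓ.le (by linarith) 3)
  have hvol2 : volume (cube c₂ l₂) ≤ V := by
    rw [cube_volume c₂ hl2, ← ENNReal.ofReal_pow hl2]
    exact ENNReal.ofReal_le_ofReal (pow_le_pow_left₀ hl2 h2hi 3)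
  have hvol3 : volume (cube c₃ l₃) ≤ V := by
    rw [cube_volume c₃ hl3, ← ENNReal.ofReal_pow hl3]
    exact ENNReal.ofReal_le_ofReal (pow_le_pow_left₀ hl3 h3hi 3)
  -- bound on side lengths of triangles
  have hM : ∀ x₁ ∈ cube c ℓ, ∀ x₂ ∈ cube c₂ l₂, ∀ x₃ ∈ cube c₃ l₃,
      ‖x₂ - x₁‖ + ‖x₃ - x₁‖ ≤ 40 * ℓ := by
    intro x₁ h1 x₂ h2 x₃ h3
    have e1 : ‖x₁ - c‖ ≤ ℓ := norm_le_of_mem_cube hℓ.le h1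
    have e2 : ‖x₂ - c‖ < 10 * ℓ := by
      have := h2sub h2; rwa [mem_ball, dist_eq_norm] at this
    have e3 : ‖x₃ - c‖ < 10 * ℓ := by
      have := h3sub h3; rwa [mem_ball, dist_eq_norm] at this
    have t2 : ‖x₂ - x₁‖ ≤ ‖x₂ - c‖ + ‖x₁ - c‖ := by
      have : x₂ - x₁ = (x₂ - c) + (c - x₁) := by abel
      rw [this]
      calc ‖(x₂ - c) + (c - x₁)‖ ≤ ‖x₂ - c‖ + ‖c - x₁‖ := norm_add_le _ _
        _ = ‖x₂ - c‖ + ‖x₁ - c‖ := by rw [norm_sub_rev c x₁]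
    have t3 : ‖x₃ - x₁‖ ≤ ‖x₃ - c‖ + ‖x₁ - c‖ := by
      have : x₃ - x₁ = (x₃ - c) + (c - x₁) := by abel
      rw [this]
      calc ‖(x₃ - c) + (c - x₁)‖ ≤ ‖x₃ - c‖ + ‖c - x₁‖ := norm_add_le _ _
        _ = ‖x₃ - c‖ + ‖x₁ - c‖ := by rw [norm_sub_rev c x₁]
    linarith
  -- main bound
  have key : (∫⁻ x₁ in cube c ℓ, ∫⁻ x₂ in cube c₂ l₂, ∫⁻ x₃ in cube c₃ l₃,
      ∫⁻ z in convexHull ℝ {x₁, x₂, x₃}, ENNReal.ofReal |v z| ∂(μH[2])) ≤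
      ENNReal.ofReal (530841600 * ℓ ^ 8) * I := by
    set K0 : ℝ≥0∞ := ENNReal.ofReal ((40*ℓ)^2) with hK0
    have step1 : (∫⁻ x₁ in cube c ℓ, ∫⁻ x₂ in cube c₂ l₂, ∫⁻ x₃ in cube c₃ l₃,
        ∫⁻ z in convexHull ℝ {x₁, x₂, x₃}, ENNReal.ofReal |v z| ∂(μH[2])) ≤
        ∫⁻ x₁ in cube c ℓ, ∫⁻ x₂ in cube c₂ l₂, ∫⁻ x₃ in cube c₃ l₃,
          K0 * ∫⁻ p in T2, F (x₁ + (p 0 • (x₂ - x₁) + p 1 • (x₃ - x₁))) := by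
      apply setLIntegral_mono' (measurableSet_cube c ℓ); intro x₁ h1
      apply setLIntegral_mono' (measurableSet_cube c₂ l₂); intro x₂ h2
      apply setLIntegral_mono' (measurableSet_cube c₃ l₃); intro x₃ h3
      calc ∫⁻ z in convexHull ℝ {x₁, x₂, x₃}, ENNReal.ofReal |v z| ∂(μH[2])
          ≤ ∫⁻ z in convexHull ℝ {x₁, x₂, x₃}, F z ∂(μH[2]) :=
            lintegral_mono fun z => hFle z
        _ ≤ K0 * ∫⁻ p in T2, F (x₁ + (p 0 • (x₂ - x₁) + p 1 • (x₃ - x₁))) :=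
            hull_lintegral_le hF x₁ x₂ x₃ (by positivity) (hM x₁ h1 x₂ h2 x₃ h3)
    have step2 : (∫⁻ x₁ in cube c ℓ, ∫⁻ x₂ in cube c₂ l₂, ∫⁻ x₃ in cube c₃ l₃,
        K0 * ∫⁻ p in T2, F (x₁ + (p 0 • (x₂ - x₁) + p 1 • (x₃ - x₁)))) =
        K0 * ∫⁻ x₁ in cube c ℓ, ∫⁻ x₂ in cube c₂ l₂, ∫⁻ x₃ in cube c₃ l₃,
          ∫⁻ p in T2, F (x₁ + (p 0 • (x₂ - x₁) + p 1 • (x₃ - x₁))) := by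
      rw [← lintegral_const_mul' K0 _ ENNReal.ofReal_ne_top]
      apply lintegral_congr; intro x₁
      rw [← lintegral_const_mul' K0 _ ENNReal.ofReal_ne_top]
      apply lintegral_congr; intro x₂
      rw [← lintegral_const_mul' K0 _ ENNReal.ofReal_ne_top]
    have step3 := combine hF (cube c ℓ) (cube c₂ l₂) (cube c₃ l₃) hvol1 hvol2 hvol3
    calc (∫⁻ x₁ in cube c ℓ, ∫⁻ x₂ in cube c₂ l₂, ∫⁻ x₃ in cube c₃ l₃,
        ∫⁻ z in convexHull ℝ {x₁, x₂, x₃}, ENNReal.ofReal |v z| ∂(μH[2]))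
        ≤ K0 * ∫⁻ x₁ in cube c ℓ, ∫⁻ x₂ in cube c₂ l₂, ∫⁻ x₃ in cube c₃ l₃,
            ∫⁻ p in T2, F (x₁ + (p 0 • (x₂ - x₁) + p 1 • (x₃ - x₁))) := by
          rw [← step2]; exact step1
      _ ≤ K0 * (3 * ((27 * ∫⁻ z, F z) * (V * V))) := mul_le_mul_right step3 _
      _ = K0 * (3 * ((27 * I) * (V * V))) := by rw [hFint]
      _ = (ENNReal.ofReal ((40*ℓ)^2) * ENNReal.ofReal 3 * ENNReal.ofReal 27 *
            ENNReal.ofReal ((4*ℓ)^3) * ENNReal.ofReal ((4*ℓ)^3)) * I := by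
          rw [show (3 : ℝ≥0∞) = ENNReal.ofReal 3 by norm_num,
            show (27 : ℝ≥0∞) = ENNReal.ofReal 27 by norm_num]
          ring
      _ = ENNReal.ofReal (530841600 * ℓ ^ 8) * I := by
          rw [← ENNReal.ofReal_mul (by positivity), ← ENNReal.ofReal_mul (by positivity),
            ← ENNReal.ofReal_mul (by positivity), ← ENNReal.ofReal_mul (by positivity)]
          congr 1
          ring
  constructor
  · calc _ ≤ ENNReal.ofReal (530841600 * ℓ ^ 8) * I := key
      _ ≤ ENNReal.ofReal (530841600 * 8000 * ℓ ^ 8) * I := by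
          apply mul_le_mul_left
          apply ENNReal.ofReal_le_ofReal
          nlinarith [pow_pos hℓ 8]
  · have hball : volume (ball c (10 * ℓ)) ≤ ENNReal.ofReal ((20*ℓ)^3) := by
      have hsub : ball c (10 * ℓ) ⊆ cube c (20 * ℓ) := by
        intro x hx i
        have h1 : |(x - c) i| ≤ ‖x - c‖ := coord_le_norm (x - c) i
        have h2 : ‖x - c‖ < 10 * ℓ := by rwa [mem_ball, dist_eq_norm] at hx
        have h3 : ((x - c) i) = x i - c i := by simp
        rw [h3] at h1
        calc |x i - c i| ≤ ‖x - c‖ := h1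
          _ ≤ 20 * ℓ / 2 := by linarith
      calc volume (ball c (10 * ℓ)) ≤ volume (cube c (20 * ℓ)) := measure_mono hsub
        _ = ENNReal.ofReal ((20*ℓ)^3) := by
            rw [cube_volume c (by positivity), ← ENNReal.ofReal_pow (by positivity)]
    have hconst : ENNReal.ofReal (530841600 * ℓ ^ 8) ≤
        ENNReal.ofReal (530841600 * 8000 * ℓ ^ 11) * (volume (ball c (10 * ℓ)))⁻¹ := by
      have h1 : (ENNReal.ofReal ((20*ℓ)^3))⁻¹ ≤ (volume (ball c (10 * ℓ)))⁻¹ :=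
        ENNReal.inv_le_inv' hball
      have h2 : ENNReal.ofReal (530841600 * ℓ ^ 8) =
          ENNReal.ofReal (530841600 * 8000 * ℓ ^ 11) * (ENNReal.ofReal ((20*ℓ)^3))⁻¹ := by
        rw [← _root_.div_eq_mul_inv, ← ENNReal.ofReal_div_of_pos (by positivity)]
        congr 1
        rw [_root_.eq_div_iff (by positivity)]
        ring
      rw [h2]
      exact mul_le_mul_right h1 _
    calc _ ≤ ENNReal.ofReal (530841600 * ℓ ^ 8) * I := key
      _ ≤ (ENNReal.ofReal (530841600 * 8000 * ℓ ^ 11) * (volume (ball c (10 * ℓ)))⁻¹) * I :=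
          mul_le_mul_left hconst _
      _ = ENNReal.ofReal (530841600 * 8000 * ℓ ^ 11) *
            ((volume (ball c (10 * ℓ)))⁻¹ * I) := by rw [mul_assoc]
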